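/- Let T be a normal τ-measurable operator with μ_t(T) → 0 at infinity, and write Re T = (T+T*)/2. Then for 0 < r < s < ∞, |Φ(r,s; Re T) − Re Φ(r,s; T)| ≤ r τ(E_{|T|}(r,∞)) + s τ(E_{|T|}(s,∞)), where Φ(r,s;T) = ∫_{r<|z|≤s} z dν_T(z) and ν_T is the spectral measure. -/

import Mathlib

open MeasureTheory Set

set_option maxHeartbeats 1000000 in
/-- For a normal τ-measurable operator `T` with `μ_t(T) → 0` and spectral measure
`ν = ν_T`, the spectral measure of `Re T` is the pushforward of `ν` under `z ↦ Re z`,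
and for `0 < r < s`,
`|Φ(r,s;Re T) − Re Φ(r,s;T)| ≤ r τ(E_{|T|}(r,∞)) + s τ(E_{|T|}(s,∞))`. -/
theorem stmt_10 (ν : Measure ℂ)
    (hfin : ∀ x : ℝ, 0 < x → ν {z : ℂ | x < ‖z‖} < ⊤)
    (r s : ℝ) (hr : 0 < r) (hrs : r < s) :
    |(∫ x in {x : ℝ | r < |x| ∧ |x| ≤ s}, x ∂(Measure.map Complex.re ν)) -
        (∫ z in {z : ℂ | r < ‖z‖ ∧ ‖z‖ ≤ s}, z ∂ν).re| ≤
      r * (ν {z : ℂ | r < ‖z‖}).toReal + s * (ν {z : ℂ | s < ‖z‖}).toReal := by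
  have hs0 : 0 < s := hr.trans hrs
  have hre : Measurable Complex.re := Complex.measurable_re
  have hnorm : Measurable fun z : ℂ => ‖z‖ := measurable_norm
  set B₁ : Set ℂ := {z : ℂ | r < |z.re| ∧ |z.re| ≤ s} with hB₁def
  set B₂ : Set ℂ := {z : ℂ | r < ‖z‖ ∧ ‖z‖ ≤ s} with hB₂def
  have hB₁ : MeasurableSet B₁ :=
    ((measurableSet_lt measurable_const hre.abs).inter
      (measurableSet_le hre.abs measurable_const))
  have hB₂ : MeasurableSet B₂ :=
    ((measurableSet_lt measurable_const hnorm).inter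
      (measurableSet_le hnorm measurable_const))
  have habs_le : ∀ z : ℂ, |z.re| ≤ ‖z‖ := fun z => Complex.abs_re_le_norm z
  have hνr : ν {z : ℂ | r < ‖z‖} < ⊤ := hfin r hr
  have hνs : ν {z : ℂ | s < ‖z‖} < ⊤ := hfin s hs0
  -- subset facts
  have hB₁r : B₁ ⊆ {z : ℂ | r < ‖z‖} := fun z hz => lt_of_lt_of_le hz.1 (habs_le z)
  have hB₂r : B₂ ⊆ {z : ℂ | r < ‖z‖} := fun z hz => hz.1
  have h12s : B₁ \ B₂ ⊆ {z : ℂ | s < ‖z‖} := by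
    rintro z ⟨⟨h1, h2⟩, hn⟩
    by_contra hle
    simp only [Set.mem_setOf_eq, not_lt] at hle
    exact hn ⟨lt_of_lt_of_le h1 (habs_le z), hle⟩
  have h21r : ∀ z ∈ B₂ \ B₁, |z.re| ≤ r := by
    rintro z ⟨⟨h1, h2⟩, hn⟩
    by_contra hgt
    simp only [Set.mem_setOf_eq, not_le] at hgt
    exact hn ⟨hgt, (habs_le z).trans h2⟩
  -- finiteness of the pieces
  have hfin1 : ν B₁ < ⊤ := lt_of_le_of_lt (measure_mono hB₁r) hνr
  have hfin2 : ν B₂ < ⊤ := lt_of_le_of_lt (measure_mono hB₂r) hνr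
  -- integrability of z ↦ z.re on B₁ and B₂
  have hmre : AEStronglyMeasurable (fun z : ℂ => z.re) ν := hre.aestronglyMeasurable
  have hint1 : IntegrableOn (fun z : ℂ => z.re) B₁ ν := by
    apply Measure.integrableOn_of_bounded hfin1.ne hmre
    filter_upwards [ae_restrict_mem hB₁] with z hz
    simpa [Real.norm_eq_abs] using hz.2
  have hint2C : IntegrableOn (fun z : ℂ => z) B₂ ν := by
    apply Measure.integrableOn_of_bounded hfin2.ne aestronglyMeasurable_id
    filter_upwards [ae_restrict_mem hB₂] with z hz
    exact hz.2
  have hint2 : IntegrableOn (fun z : ℂ => z.re) B₂ ν := by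
    apply Measure.integrableOn_of_bounded hfin2.ne hmre
    filter_upwards [ae_restrict_mem hB₂] with z hz
    simpa [Real.norm_eq_abs] using (habs_le z).trans hz.2
  -- rewrite the pushforward integral
  have hA : MeasurableSet {x : ℝ | r < |x| ∧ |x| ≤ s} :=
    ((measurableSet_lt measurable_const measurable_abs).inter
      (measurableSet_le measurable_abs measurable_const))
  have hmap : (∫ x in {x : ℝ | r < |x| ∧ |x| ≤ s}, x ∂(Measure.map Complex.re ν)) =
      ∫ z in B₁, z.re ∂ν := by
    rw [setIntegral_map (f := fun x : ℝ => x) hA measurable_id.aestronglyMeasurable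
      hre.aemeasurable]
    rfl
  -- rewrite the real part of the complex integral
  have hRe : (∫ z in B₂, z ∂ν).re = ∫ z in B₂, z.re ∂ν :=
    (integral_re hint2C).symm
  rw [hmap, hRe]
  -- decompose both integrals
  have hi : IntegrableOn (fun z : ℂ => z.re) (B₁ ∩ B₂) ν :=
    hint1.mono_set inter_subset_left
  have hi12 : IntegrableOn (fun z : ℂ => z.re) (B₁ \ B₂) ν :=
    hint1.mono_set diff_subset
  have hi21 : IntegrableOn (fun z : ℂ => z.re) (B₂ \ B₁) ν :=
    hint2.mono_set diff_subset
  have hdisj1 : Disjoint (B₁ ∩ B₂) (B₁ \ B₂) := by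
    rw [Set.disjoint_left]
    rintro z ⟨-, hz2⟩ ⟨-, hz2'⟩
    exact hz2' hz2
  have hdisj2 : Disjoint (B₁ ∩ B₂) (B₂ \ B₁) := by
    rw [Set.disjoint_left]
    rintro z ⟨hz1, -⟩ ⟨-, hz1'⟩
    exact hz1' hz1
  have hd1 : (∫ z in B₁, z.re ∂ν) = (∫ z in B₁ ∩ B₂, z.re ∂ν) + ∫ z in B₁ \ B₂, z.re ∂ν := by
    rw [← setIntegral_union hdisj1 (hB₁.diff hB₂) hi hi12, Set.inter_union_diff]
  have hd2 : (∫ z in B₂, z.re ∂ν) = (∫ z in B₁ ∩ B₂, z.re ∂ν) + ∫ z in B₂ \ B₁, z.re ∂ν := by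
    rw [← setIntegral_union hdisj2 (hB₂.diff hB₁) hi hi21, Set.inter_comm B₁ B₂,
      Set.inter_union_diff]
  rw [hd1, hd2]
  have key : |(∫ z in B₁ ∩ B₂, z.re ∂ν) + (∫ z in B₁ \ B₂, z.re ∂ν) -
      ((∫ z in B₁ ∩ B₂, z.re ∂ν) + ∫ z in B₂ \ B₁, z.re ∂ν)| ≤
      |∫ z in B₁ \ B₂, z.re ∂ν| + |∫ z in B₂ \ B₁, z.re ∂ν| := by
    rw [add_sub_add_left_eq_sub]
    exact abs_sub _ _
  refine key.trans ?_
  have hb1 : |∫ z in B₁ \ B₂, z.re ∂ν| ≤ s * (ν {z : ℂ | s < ‖z‖}).toReal := by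
    have h1 : |∫ z in B₁ \ B₂, z.re ∂ν| ≤ s * (ν (B₁ \ B₂)).toReal := by
      have := norm_setIntegral_le_of_norm_le_const (μ := ν) (s := B₁ \ B₂)
        (f := fun z : ℂ => z.re) (C := s)
        (lt_of_le_of_lt (measure_mono h12s) hνs)
        (fun z hz => by simpa [Real.norm_eq_abs] using hz.1.2)
      simpa [Real.norm_eq_abs, measureReal_def] using this
    exact h1.trans (mul_le_mul_of_nonneg_left
      (ENNReal.toReal_mono hνs.ne (measure_mono h12s)) hs0.le)
  have hb2 : |∫ z in B₂ \ B₁, z.re ∂ν| ≤ r * (ν {z : ℂ | r < ‖z‖}).toReal := by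
    have h1 : |∫ z in B₂ \ B₁, z.re ∂ν| ≤ r * (ν (B₂ \ B₁)).toReal := by
      have := norm_setIntegral_le_of_norm_le_const (μ := ν) (s := B₂ \ B₁)
        (f := fun z : ℂ => z.re) (C := r)
        (lt_of_le_of_lt (measure_mono (diff_subset.trans hB₂r)) hνr)
        (fun z hz => by simpa [Real.norm_eq_abs] using h21r z hz)
      simpa [Real.norm_eq_abs, measureReal_def] using this
    exact h1.trans (mul_le_mul_of_nonneg_left
      (ENNReal.toReal_mono hνr.ne (measure_mono (diff_subset.trans hB₂r))) hr.le)
  linarith
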